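/- Under the stated setting, suppose there exists a non-decreasing continuous function L : [0,∞) → [0,∞) such that |f(d,x,u)| + |g(d,x,u)| ≤ L(|(x,u)|)·|x|² + L(|(x,u)|)·|x|·|u| for all (d,x,u) ∈ D×ℝⁿ×ℝ. Then there exist constants R* > 0 and C ∈ (0,1] such that for every ω > 0 and every R ∈ (0,R*) there exist constants M > 0 and δ > 0 such that conditions (3.3), (3.4), (3.5) hold with K = C·R. -/

import Mathlib

open Matrix MeasureTheory Set Filter

noncomputable section

/-- The `m × m` matrix with ones on the subdiagonal and zeros elsewhere. -/
def matA (m : ℕ) : Matrix (Fin m) (Fin m) ℝ :=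
  Matrix.of fun i j => if (i : ℕ) = (j : ℕ) + 1 then 1 else 0

/-- The vector `b = (1,0,…,0)'` as a plain function. -/
def vecbf (m : ℕ) : Fin m → ℝ := fun i => if (i : ℕ) = 0 then 1 else 0

/-- The vector `b = (1,0,…,0)'` in Euclidean space. -/
def vecb (m : ℕ) : EuclideanSpace ℝ (Fin m) := (WithLp.equiv 2 (Fin m → ℝ)).symm (vecbf m)

/-- View a Euclidean vector as a plain function. -/
def ef {m : ℕ} (x : EuclideanSpace ℝ (Fin m)) : Fin m → ℝ := x

/-- Matrix-vector multiplication on Euclidean space. -/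
def mulVecE {m : ℕ} (M : Matrix (Fin m) (Fin m) ℝ) (x : EuclideanSpace ℝ (Fin m)) :
    EuclideanSpace ℝ (Fin m) :=
  (WithLp.equiv 2 (Fin m → ℝ)).symm (M.mulVec (ef x))

/-- Euclidean inner product `x'y`. -/
def ip {m : ℕ} (x y : EuclideanSpace ℝ (Fin m)) : ℝ := ∑ i, x i * y i

/-- Quadratic form `x'Px`. -/
def qf {m : ℕ} (P : Matrix (Fin m) (Fin m) ℝ) (x : EuclideanSpace ℝ (Fin m)) : ℝ :=
  ip x (mulVecE P x)

/-- The saturation function `sat(s) = s / max(1,|s|)`. -/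
def sat (s : ℝ) : ℝ := s / max 1 |s|

/-- The vector `c = -(A' + pb')⁻¹ (0,…,0,1)'`. -/
def cvec (n : ℕ) (p : EuclideanSpace ℝ (Fin (n+1))) : EuclideanSpace ℝ (Fin (n+1)) :=
  (WithLp.equiv 2 (Fin (n+1) → ℝ)).symm
    (-((((matA (n+1))ᵀ + vecMulVec (ef p) (vecbf (n+1)))⁻¹).mulVec (Pi.single (Fin.last n) 1)))

/-- Condition (3.3): `x'P(Ax + f(d,x,u) + bu) < 0` whenever `d ∈ D`, `x'Px = R²` and
`|u - p'x| ≤ K|c'b|`. -/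
def Cond33 {l n : ℕ} (D : Set (EuclideanSpace ℝ (Fin l)))
    (f : EuclideanSpace ℝ (Fin l) → EuclideanSpace ℝ (Fin (n+1)) → ℝ → EuclideanSpace ℝ (Fin (n+1)))
    (P : Matrix (Fin (n+1)) (Fin (n+1)) ℝ) (p : EuclideanSpace ℝ (Fin (n+1))) (R K : ℝ) : Prop :=
  ∀ d ∈ D, ∀ x : EuclideanSpace ℝ (Fin (n+1)), ∀ u : ℝ,
    qf P x = R ^ 2 → |u - ip p x| ≤ K * |ip (cvec n p) (vecb (n+1))| →
      ip x (mulVecE P (mulVecE (matA (n+1)) x + f d x u + u • vecb (n+1))) < 0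

/-- Condition (3.4): `|g(d,x,u) + c'f(d,x,u)| < K(c'b)²` whenever `d ∈ D`, `x'Px ≤ R²` and
`|u - p'x| ≤ K|c'b|`. -/
def Cond34 {l n : ℕ} (D : Set (EuclideanSpace ℝ (Fin l)))
    (f : EuclideanSpace ℝ (Fin l) → EuclideanSpace ℝ (Fin (n+1)) → ℝ → EuclideanSpace ℝ (Fin (n+1)))
    (g : EuclideanSpace ℝ (Fin l) → EuclideanSpace ℝ (Fin (n+1)) → ℝ → ℝ)
    (P : Matrix (Fin (n+1)) (Fin (n+1)) ℝ) (p : EuclideanSpace ℝ (Fin (n+1))) (R K : ℝ) : Prop :=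
  ∀ d ∈ D, ∀ x : EuclideanSpace ℝ (Fin (n+1)), ∀ u : ℝ,
    qf P x ≤ R ^ 2 → |u - ip p x| ≤ K * |ip (cvec n p) (vecb (n+1))| →
      |g d x u + ip (cvec n p) (f d x u)| < K * (ip (cvec n p) (vecb (n+1))) ^ 2

/-- Condition (3.5). -/
def Cond35 {l n : ℕ} (D : Set (EuclideanSpace ℝ (Fin l)))
    (f : EuclideanSpace ℝ (Fin l) → EuclideanSpace ℝ (Fin (n+1)) → ℝ → EuclideanSpace ℝ (Fin (n+1)))
    (g : EuclideanSpace ℝ (Fin l) → EuclideanSpace ℝ (Fin (n+1)) → ℝ → ℝ)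
    (P : Matrix (Fin (n+1)) (Fin (n+1)) ℝ) (p : EuclideanSpace ℝ (Fin (n+1)))
    (M R K ω δ : ℝ) : Prop :=
  ∀ d ∈ D, ∀ x : EuclideanSpace ℝ (Fin (n+1)), ∀ z : ℝ,
    qf P x ≤ R ^ 2 → ω * |z| ≤ 1 →
      ∀ u : ℝ, u = ip p x - K * ip (cvec n p) (vecb (n+1)) * ω * z →
        z * (M * g d x u + M * ip (cvec n p) (f d x u)
              - K * ip (cvec n p) (vecb (n+1)) * ω * ip (vecb (n+1)) (mulVecE P x))
          ≤ (M * K * (ip (cvec n p) (vecb (n+1))) ^ 2 * ω - δ) * z ^ 2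
            - ip x (mulVecE P
                (mulVecE (matA (n+1) + vecMulVec (vecbf (n+1)) (ef p) + δ • 1) x + f d x u))

-- basic facts
lemma ip_eq_inner {m : ℕ} (x y : EuclideanSpace ℝ (Fin m)) : ip x y = inner ℝ x y := by
  simp [ip, PiLp.inner_apply, RCLike.inner_apply, mul_comm]

lemma abs_ip_le {m : ℕ} (x y : EuclideanSpace ℝ (Fin m)) : |ip x y| ≤ ‖x‖ * ‖y‖ := by
  rw [ip_eq_inner]; exact abs_real_inner_le_norm x y

lemma ip_dot {m : ℕ} (x y : EuclideanSpace ℝ (Fin m)) : ip x y = (ef x) ⬝ᵥ (ef y) := rfl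

lemma ip_add_right {m : ℕ} (x y z : EuclideanSpace ℝ (Fin m)) :
    ip x (y + z) = ip x y + ip x z := by
  simp [ip_eq_inner, inner_add_right]

lemma ip_smul_right {m : ℕ} (r : ℝ) (x y : EuclideanSpace ℝ (Fin m)) :
    ip x (r • y) = r * ip x y := by
  simp only [ip, Finset.mul_sum]
  refine Finset.sum_congr rfl fun i _ => ?_
  have h : (r • y) i = r * y i := rfl
  rw [h]; ring

lemma mulVecE_addvec {m : ℕ} (M : Matrix (Fin m) (Fin m) ℝ) (x y : EuclideanSpace ℝ (Fin m)) :
    mulVecE M (x + y) = mulVecE M x + mulVecE M y := by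
  ext i
  show M.mulVec (ef x + ef y) i = M.mulVec (ef x) i + M.mulVec (ef y) i
  rw [Matrix.mulVec_add]; rfl

lemma mulVecE_addmat {m : ℕ} (M N : Matrix (Fin m) (Fin m) ℝ) (x : EuclideanSpace ℝ (Fin m)) :
    mulVecE (M + N) x = mulVecE M x + mulVecE N x := by
  ext i
  show (M + N).mulVec (ef x) i = M.mulVec (ef x) i + N.mulVec (ef x) i
  rw [Matrix.add_mulVec]; rfl

lemma mulVecE_smulvec {m : ℕ} (M : Matrix (Fin m) (Fin m) ℝ) (r : ℝ) (x : EuclideanSpace ℝ (Fin m)) :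
    mulVecE M (r • x) = r • mulVecE M x := by
  ext i
  show M.mulVec (r • ef x) i = (r • ((WithLp.equiv 2 (Fin m → ℝ)).symm (M.mulVec (ef x)))) i
  rw [Matrix.mulVec_smul]; rfl

lemma mulVecE_mulmat {m : ℕ} (M N : Matrix (Fin m) (Fin m) ℝ) (x : EuclideanSpace ℝ (Fin m)) :
    mulVecE (M * N) x = mulVecE M (mulVecE N x) := by
  ext i
  show (M * N).mulVec (ef x) i = M.mulVec (N.mulVec (ef x)) i
  rw [Matrix.mulVec_mulVec]

lemma mulVecE_neg {m : ℕ} (M : Matrix (Fin m) (Fin m) ℝ) (x : EuclideanSpace ℝ (Fin m)) :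
    mulVecE (-M) x = -(mulVecE M x) := by
  ext i
  show (-M).mulVec (ef x) i = (-(mulVecE M x)) i
  rw [Matrix.neg_mulVec]; rfl

lemma ip_neg_right {m : ℕ} (x y : EuclideanSpace ℝ (Fin m)) : ip x (-y) = -(ip x y) := by
  simp [ip_eq_inner, inner_neg_right]

lemma ip_smul_left {m : ℕ} (r : ℝ) (x y : EuclideanSpace ℝ (Fin m)) :
    ip (r • x) y = r * ip x y := by
  simp only [ip, Finset.mul_sum]
  refine Finset.sum_congr rfl fun i _ => ?_
  have h : (r • x) i = r * x i := rfl
  rw [h]; ring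

-- operator norm bound
lemma exists_opbound {m : ℕ} (M : Matrix (Fin m) (Fin m) ℝ) :
    ∃ c : ℝ, 1 ≤ c ∧ ∀ x : EuclideanSpace ℝ (Fin m), ‖mulVecE M x‖ ≤ c * ‖x‖ := by
  let φ : EuclideanSpace ℝ (Fin m) →ₗ[ℝ] EuclideanSpace ℝ (Fin m) :=
    { toFun := mulVecE M
      map_add' := mulVecE_addvec M
      map_smul' := fun r x => mulVecE_smulvec M r x }
  let ψ := LinearMap.toContinuousLinearMap φ
  refine ⟨max ‖ψ‖ 1, le_max_right _ _, fun x => ?_⟩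
  calc ‖mulVecE M x‖ = ‖ψ x‖ := rfl
    _ ≤ ‖ψ‖ * ‖x‖ := ψ.le_opNorm x
    _ ≤ max ‖ψ‖ 1 * ‖x‖ := mul_le_mul_of_nonneg_right (le_max_left _ _) (norm_nonneg x)

lemma qf_dot {m : ℕ} (Q : Matrix (Fin m) (Fin m) ℝ) (x : EuclideanSpace ℝ (Fin m)) :
    qf Q x = (ef x) ⬝ᵥ (Q.mulVec (ef x)) := rfl

lemma qf_smul {m : ℕ} (Q : Matrix (Fin m) (Fin m) ℝ) (r : ℝ) (x : EuclideanSpace ℝ (Fin m)) :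
    qf Q (r • x) = r ^ 2 * qf Q x := by
  rw [qf, mulVecE_smulvec, ip_smul_right, ip_smul_left, ← qf]; ring

lemma qf_pos {m : ℕ} {Q : Matrix (Fin m) (Fin m) ℝ} (hQ : Q.PosDef)
    {x : EuclideanSpace ℝ (Fin m)} (hx : x ≠ 0) : 0 < qf Q x := by
  rw [qf_dot]
  have hefx : ef x ≠ 0 := by
    intro h; apply hx; ext i
    have := congrFun h i; simpa [ef] using this
  have := hQ.dotProduct_mulVec_pos hefx
  simpa using this

-- positive-definite lower bound via compactness
lemma posdef_lb {m : ℕ} {Q : Matrix (Fin (m+1)) (Fin (m+1)) ℝ} (hQ : Q.PosDef) :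
    ∃ lam : ℝ, 0 < lam ∧ ∀ x : EuclideanSpace ℝ (Fin (m+1)), lam * ‖x‖ ^ 2 ≤ qf Q x := by
  have hcont : Continuous fun x : EuclideanSpace ℝ (Fin (m+1)) => qf Q x := by
    have hφ : Continuous fun x : EuclideanSpace ℝ (Fin (m+1)) => mulVecE Q x := by
      let φ : EuclideanSpace ℝ (Fin (m+1)) →ₗ[ℝ] EuclideanSpace ℝ (Fin (m+1)) :=
        { toFun := mulVecE Q
          map_add' := mulVecE_addvec Q
          map_smul' := fun r x => mulVecE_smulvec Q r x }
      exact φ.continuous_of_finiteDimensional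
    have h2 : (fun x : EuclideanSpace ℝ (Fin (m+1)) => qf Q x)
        = fun x => (inner ℝ x (mulVecE Q x) : ℝ) := by
      funext x; rw [qf, ip_eq_inner]
    rw [h2]; exact continuous_id.inner hφ
  have hsph : IsCompact (Metric.sphere (0 : EuclideanSpace ℝ (Fin (m+1))) 1) :=
    isCompact_sphere 0 1
  have hne : (Metric.sphere (0 : EuclideanSpace ℝ (Fin (m+1))) 1).Nonempty := by
    refine ⟨EuclideanSpace.single 0 1, ?_⟩
    simp [EuclideanSpace.norm_single]
  obtain ⟨x0, hx0mem, hx0min⟩ := hsph.exists_isMinOn hne hcont.continuousOn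
  have hx0norm : ‖x0‖ = 1 := by simpa using hx0mem
  have hx0ne : x0 ≠ 0 := by intro h; rw [h] at hx0norm; simp at hx0norm
  refine ⟨qf Q x0, qf_pos hQ hx0ne, fun x => ?_⟩
  rcases eq_or_ne x 0 with rfl | hx
  · simp [qf, ip, mulVecE]
  · have hnx : 0 < ‖x‖ := norm_pos_iff.mpr hx
    have hy : ‖(‖x‖⁻¹ • x)‖ = 1 := by
      rw [norm_smul]; simp [abs_of_pos hnx, inv_mul_cancel₀ hnx.ne']
    have hmem : (‖x‖⁻¹ • x) ∈ Metric.sphere (0 : EuclideanSpace ℝ (Fin (m+1))) 1 := by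
      simpa using hy
    have hmin := hx0min hmem
    have hq : qf Q (‖x‖⁻¹ • x) = (‖x‖⁻¹) ^ 2 * qf Q x := qf_smul Q _ x
    have h3 : qf Q x0 ≤ (‖x‖⁻¹) ^ 2 * qf Q x := by rw [← hq]; exact hmin
    have h4 := mul_le_mul_of_nonneg_right h3 (by positivity : (0:ℝ) ≤ ‖x‖ ^ 2)
    calc qf Q x0 * ‖x‖ ^ 2 ≤ (‖x‖⁻¹) ^ 2 * qf Q x * ‖x‖ ^ 2 := h4
      _ = qf Q x := by field_simp

lemma young {ε : ℝ} (hε : 0 < ε) (p q : ℝ) : p * q ≤ ε * p ^ 2 + q ^ 2 / (4 * ε) := by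
  rw [← sub_nonneg]
  have h : ε * p ^ 2 + q ^ 2 / (4 * ε) - p * q = (2 * ε * p - q) ^ 2 / (4 * ε) := by
    field_simp; ring
  rw [h]; positivity


lemma vecMulVec_transpose' {m : ℕ} (w v : Fin m → ℝ) : (vecMulVec w v)ᵀ = vecMulVec v w := by
  ext i j; simp [vecMulVec_apply, transpose_apply, mul_comm]

lemma vecMulVec_mulVec' {m : ℕ} (w v x : Fin m → ℝ) : (vecMulVec w v) *ᵥ x = (v ⬝ᵥ x) • w := by
  ext i; simp [vecMulVec_apply, mulVec, dotProduct, Finset.sum_mul]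
  exact Finset.sum_congr rfl fun j _ => by ring

/-- decomposition `A x + u b = S x + (u - p'x) b` with `S = A + b p'`. -/
lemma Sdecomp {n : ℕ} (p x : EuclideanSpace ℝ (Fin (n+1))) (u : ℝ) :
    mulVecE (matA (n+1)) x + u • vecb (n+1)
      = mulVecE (matA (n+1) + vecMulVec (vecbf (n+1)) (ef p)) x
        + (u - ip p x) • vecb (n+1) := by
  rw [mulVecE_addmat]
  have h : mulVecE (vecMulVec (vecbf (n+1)) (ef p)) x = (ip p x) • vecb (n+1) := by
    ext i
    show ((vecMulVec (vecbf (n+1)) (ef p)) *ᵥ (ef x)) i = ((ip p x) • vecb (n+1)) i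
    rw [vecMulVec_mulVec']
    have : (ef p) ⬝ᵥ (ef x) = ip p x := rfl
    rw [this]; rfl
  rw [h]
  have : (u - ip p x) • vecb (n+1) = u • vecb (n+1) - (ip p x) • vecb (n+1) := sub_smul u _ _
  rw [this]; abel

/-- `x'P(Sx) = -½ x'Qx` with `Q = -(PS + SᵀP)` when `P` symmetric. -/
lemma key_sym {m : ℕ} (P S : Matrix (Fin m) (Fin m) ℝ) (hPs : Pᵀ = P)
    (x : EuclideanSpace ℝ (Fin m)) :
    ip x (mulVecE P (mulVecE S x)) = -(qf (-(P * S + Sᵀ * P)) x) / 2 := by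
  have h1 : ip x (mulVecE P (mulVecE S x)) = (ef x) ⬝ᵥ (P *ᵥ (S *ᵥ (ef x))) := rfl
  rw [h1, qf_dot]
  rw [Matrix.neg_mulVec, dotProduct_neg, Matrix.add_mulVec]
  rw [dotProduct_add]
  rw [← Matrix.mulVec_mulVec, ← Matrix.mulVec_mulVec]
  have h2 : (ef x) ⬝ᵥ (Sᵀ *ᵥ (P *ᵥ (ef x))) = (S *ᵥ (ef x)) ⬝ᵥ (P *ᵥ (ef x)) := by
    rw [Matrix.dotProduct_mulVec, Matrix.vecMul_transpose]
  have h3 : (ef x) ⬝ᵥ (P *ᵥ (S *ᵥ (ef x))) = (S *ᵥ (ef x)) ⬝ᵥ (P *ᵥ (ef x)) := by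
    rw [Matrix.dotProduct_mulVec]
    have : (ef x) ᵥ* P = P *ᵥ (ef x) := by
      conv_lhs => rw [← hPs]
      exact Matrix.vecMul_transpose P (ef x)
    rw [this, dotProduct_comm]
  rw [h2, h3]; ring

/-- `c'b ≠ 0`. -/
lemma beta_ne {n : ℕ} (P : Matrix (Fin (n+1)) (Fin (n+1)) ℝ)
    (p : EuclideanSpace ℝ (Fin (n+1)))
    (hneg : (-(P * (matA (n+1) + vecMulVec (vecbf (n+1)) (ef p))
        + ((matA (n+1))ᵀ + vecMulVec (ef p) (vecbf (n+1))) * P)).PosDef) :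
    ip (cvec n p) (vecb (n+1)) ≠ 0 := by
  set S := matA (n+1) + vecMulVec (vecbf (n+1)) (ef p) with hS
  set B := (matA (n+1))ᵀ + vecMulVec (ef p) (vecbf (n+1)) with hB
  have hBT : B = Sᵀ := by rw [hS, hB, transpose_add, vecMulVec_transpose']
  -- S has nonzero determinant
  have hdet : S.det ≠ 0 := by
    intro h0
    obtain ⟨v, hv, hSv⟩ := (Matrix.exists_mulVec_eq_zero_iff.mpr h0)
    have hpos := hneg.dotProduct_mulVec_pos hv
    have hzero : (star v) ⬝ᵥ ((-(P * S + B * P)) *ᵥ v) = 0 := by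
      have hstar : star v = v := by simp
      rw [hstar, hBT, Matrix.neg_mulVec, dotProduct_neg, Matrix.add_mulVec,
        dotProduct_add, ← Matrix.mulVec_mulVec, ← Matrix.mulVec_mulVec, hSv,
        Matrix.mulVec_zero, dotProduct_zero]
      rw [Matrix.dotProduct_mulVec, Matrix.vecMul_transpose, hSv, zero_dotProduct]
      ring
    rw [hzero] at hpos; exact lt_irrefl 0 hpos
  have hdetB : B.det ≠ 0 := by rw [hBT, Matrix.det_transpose]; exact hdet
  -- the inverse works
  set w : Fin (n+1) → ℝ := B⁻¹ *ᵥ (Pi.single (Fin.last n) 1) with hw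
  have hBw : B *ᵥ w = Pi.single (Fin.last n) 1 := by
    rw [hw, Matrix.mulVec_mulVec, Matrix.mul_nonsing_inv B (isUnit_iff_ne_zero.mpr hdetB),
      Matrix.one_mulVec]
  -- β = -(w 0)
  have hbeta : ip (cvec n p) (vecb (n+1)) = -(w 0) := by
    have : ip (cvec n p) (vecb (n+1)) = ∑ i, (cvec n p) i * (vecbf (n+1) i) := rfl
    rw [this]
    have h2 : ∀ i : Fin (n+1), (cvec n p) i * (vecbf (n+1) i)
        = if i = 0 then -(w i) else 0 := by
      intro i
      have hc : (cvec n p) i = -(w i) := rfl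
      rw [hc, vecbf]
      by_cases h : i = 0
      · simp [h]
      · have : (i : ℕ) ≠ 0 := fun hh => h (Fin.ext hh)
        simp [h, this]
    rw [Finset.sum_congr rfl fun i _ => h2 i]
    simp
  intro hb0
  rw [hbeta, neg_eq_zero] at hb0
  -- evaluate row `last`
  have hlast := congrFun hBw (Fin.last n)
  have hsingle : (Pi.single (Fin.last n) 1 : Fin (n+1) → ℝ) (Fin.last n) = 1 := by simp
  rw [hsingle] at hlast
  have hrow : (B *ᵥ w) (Fin.last n) = p (Fin.last n) * w 0 := by
    show ∑ j, B (Fin.last n) j * w j = _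
    have hBlast : ∀ j : Fin (n+1), B (Fin.last n) j
        = p (Fin.last n) * (if (j : ℕ) = 0 then 1 else 0) := by
      intro j
      rw [hB]
      show (matA (n+1))ᵀ (Fin.last n) j + (vecMulVec (ef p) (vecbf (n+1))) (Fin.last n) j = _
      rw [vecMulVec_apply]
      have hA0 : (matA (n+1))ᵀ (Fin.last n) j = 0 := by
        show matA (n+1) j (Fin.last n) = 0
        rw [matA]
        have hj : (j : ℕ) ≠ n + 1 := by have := j.isLt; omega
        simp [Matrix.of_apply, Fin.val_last, hj]
      rw [hA0]; simp [ef, vecbf]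
    rw [Finset.sum_congr rfl fun j _ => by rw [hBlast j]]
    have h4 : ∀ j : Fin (n+1), p (Fin.last n) * (if (j : ℕ) = 0 then 1 else 0) * w j
        = if j = 0 then p (Fin.last n) * w j else 0 := by
      intro j
      by_cases h : j = 0
      · have : (j : ℕ) = 0 := by rw [h]; rfl
        simp [h, this]
      · have : (j : ℕ) ≠ 0 := fun hh => h (Fin.ext hh)
        simp [h, this]
    rw [Finset.sum_congr rfl fun j _ => h4 j]
    simp
  rw [hrow, hb0, mul_zero] at hlast
  exact zero_ne_one hlast

lemma young2 {ε B p q : ℝ} (hε : 0 < ε) (hq : q ^ 2 ≤ 4 * ε * B) : p * q ≤ ε * p ^ 2 + B := by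
  nlinarith [sq_nonneg (2 * ε * p - q), mul_pos hε hε, hε.le]

lemma ip_zero_left {m : ℕ} (y : EuclideanSpace ℝ (Fin m)) : ip 0 y = 0 := by
  have h : ∀ i : Fin m, (0 : EuclideanSpace ℝ (Fin m)) i * y i = 0 := by
    intro i
    have : (0 : EuclideanSpace ℝ (Fin m)) i = 0 := rfl
    rw [this, zero_mul]
  simp only [ip]
  rw [Finset.sum_congr rfl fun i _ => h i]
  simp

lemma sqrt_le_of_sq_le {s t : ℝ} (ht : 0 ≤ t) (h : s ^ 2 ≤ t ^ 2) (hs : 0 ≤ s) : s ≤ t := by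
  nlinarith

lemma mulVecE_smulone {m : ℕ} (δ : ℝ) (x : EuclideanSpace ℝ (Fin m)) :
    mulVecE (δ • (1 : Matrix (Fin m) (Fin m) ℝ)) x = δ • x := by
  ext i
  show ((δ • (1 : Matrix (Fin m) (Fin m) ℝ)) *ᵥ (ef x)) i = (δ • x) i
  rw [Matrix.smul_mulVec, Matrix.one_mulVec]
  rfl

set_option maxHeartbeats 2000000 in
/-- **Lemma 3.6.** If the nonlinearities `f, g` satisfy the quadratic growth bound (3.17),
then there exist `R* > 0` and `C ∈ (0,1]` such that for every `ω > 0` and `R ∈ (0,R*)`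
there exist `M, δ > 0` such that (3.3), (3.4), (3.5) hold with `K = C·R`. -/
theorem lemma_3_6 (n l : ℕ)
    (D : Set (EuclideanSpace ℝ (Fin l))) (hD : D.Nonempty) (hDc : IsCompact D)
    (f : EuclideanSpace ℝ (Fin l) → EuclideanSpace ℝ (Fin (n+1)) → ℝ → EuclideanSpace ℝ (Fin (n+1)))
    (g : EuclideanSpace ℝ (Fin l) → EuclideanSpace ℝ (Fin (n+1)) → ℝ → ℝ)
    (hfLip : LocallyLipschitz
      (fun q : EuclideanSpace ℝ (Fin l) × EuclideanSpace ℝ (Fin (n+1)) × ℝ => f q.1 q.2.1 q.2.2))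
    (hgLip : LocallyLipschitz
      (fun q : EuclideanSpace ℝ (Fin l) × EuclideanSpace ℝ (Fin (n+1)) × ℝ => g q.1 q.2.1 q.2.2))
    (hf0 : ∀ d ∈ D, f d 0 0 = 0) (hg0 : ∀ d ∈ D, g d 0 0 = 0)
    (P : Matrix (Fin (n+1)) (Fin (n+1)) ℝ) (hP : P.PosDef)
    (p : EuclideanSpace ℝ (Fin (n+1)))
    (hneg : (-(P * (matA (n+1) + vecMulVec (vecbf (n+1)) (ef p))
        + ((matA (n+1))ᵀ + vecMulVec (ef p) (vecbf (n+1))) * P)).PosDef)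
    (L : ℝ → ℝ) (hLc : ContinuousOn L (Ici 0)) (hLmono : MonotoneOn L (Ici 0))
    (hLnn : ∀ s : ℝ, 0 ≤ s → 0 ≤ L s)
    (hgrowth : ∀ d ∈ D, ∀ x : EuclideanSpace ℝ (Fin (n+1)), ∀ u : ℝ,
      ‖f d x u‖ + |g d x u| ≤ L (Real.sqrt (‖x‖ ^ 2 + u ^ 2)) * ‖x‖ ^ 2
        + L (Real.sqrt (‖x‖ ^ 2 + u ^ 2)) * ‖x‖ * |u|) :
    ∃ Rstar C : ℝ, 0 < Rstar ∧ 0 < C ∧ C ≤ 1 ∧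
      ∀ ω R : ℝ, 0 < ω → 0 < R → R < Rstar →
        ∃ M δ : ℝ, 0 < M ∧ 0 < δ ∧
          Cond33 D f P p R (C * R) ∧ Cond34 D f g P p R (C * R) ∧
            Cond35 D f g P p M R (C * R) ω δ := by
  classical
  set b : EuclideanSpace ℝ (Fin (n+1)) := vecb (n+1) with hbdef
  set c : EuclideanSpace ℝ (Fin (n+1)) := cvec n p with hcdef
  set S : Matrix (Fin (n+1)) (Fin (n+1)) ℝ := matA (n+1) + vecMulVec (vecbf (n+1)) (ef p)
    with hSdef
  set Q : Matrix (Fin (n+1)) (Fin (n+1)) ℝ := -(P * S + Sᵀ * P) with hQdef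
  have hPs : Pᵀ = P := by
    have h := hP.1
    rwa [Matrix.IsHermitian, conjTranspose_eq_transpose_of_trivial] at h
  have hBT : (matA (n+1))ᵀ + vecMulVec (ef p) (vecbf (n+1)) = Sᵀ := by
    rw [hSdef, transpose_add, vecMulVec_transpose']
  have hQpos : Q.PosDef := by
    rw [hQdef, ← hBT]
    exact hneg
  have hbne : ip c b ≠ 0 := beta_ne P p hneg
  obtain ⟨lQ, hlQ, hlQle⟩ := posdef_lb hQpos
  obtain ⟨lP, hlP, hlPle⟩ := posdef_lb hP
  obtain ⟨cP, hcP1, hcPle⟩ := exists_opbound P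
  have hcP0 : (0:ℝ) < cP := lt_of_lt_of_le one_pos hcP1
  set βa := |ip c b| with hβadef
  have hβa0 : 0 < βa := abs_pos.mpr hbne
  set nb := ‖b‖ with hnbdef
  have hnb0 : 0 ≤ nb := norm_nonneg b
  set nb' := nb + 1 with hnb'def
  have hnb'0 : 0 < nb' := by positivity
  set nc := ‖c‖ with hncdef
  have hnc0 : 0 ≤ nc := norm_nonneg c
  set np := ‖p‖ with hnpdef
  have hnp0 : 0 ≤ np := norm_nonneg p
  set sqlP := Real.sqrt lP with hsqlPdef
  have hsqlP : 0 < sqlP := Real.sqrt_pos.mpr hlP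
  have hsqlPsq : sqlP ^ 2 = lP := Real.sq_sqrt hlP.le
  set scP := Real.sqrt cP with hscPdef
  have hscP : 0 < scP := Real.sqrt_pos.mpr hcP0
  have hscPsq : scP ^ 2 = cP := Real.sq_sqrt hcP0.le
  set L0 := L 1 with hL0def
  have hL00 : 0 ≤ L0 := hLnn 1 one_pos.le
  set a0 := (1 + nc) * L0 * (1 + np) with ha0def
  have ha00 : 0 ≤ a0 := by positivity
  set a' := a0 + 1 with ha'def
  have ha'0 : 0 < a' := by positivity
  -- the constant C
  set C := min 1 (lQ / (8 * (βa * cP * nb' * scP + 1))) with hCdef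
  have hC0 : 0 < C := by
    apply lt_min one_pos
    positivity
  have hC1 : C ≤ 1 := min_le_left _ _
  have hCkey : C * (βa * cP * nb * scP) ≤ lQ / 8 := by
    have h1 : C ≤ lQ / (8 * (βa * cP * nb' * scP + 1)) := min_le_right _ _
    have h2 : 0 < 8 * (βa * cP * nb' * scP + 1) := by positivity
    have h3 : C * (8 * (βa * cP * nb' * scP + 1)) ≤ lQ := by
      rw [← le_div_iff₀ h2]; exact h1
    have h4 : βa * cP * nb * scP ≤ βa * cP * nb' * scP + 1 := by
      have h6 : nb ≤ nb' := by rw [hnb'def]; linarith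
      have h7 : βa * cP * nb ≤ βa * cP * nb' :=
        mul_le_mul_of_nonneg_left h6 (by positivity)
      have h8 : βa * cP * nb * scP ≤ βa * cP * nb' * scP :=
        mul_le_mul_of_nonneg_right h7 hscP.le
      linarith
    linarith [h3, mul_nonneg hC0.le (sub_nonneg.mpr h4)]
  -- constants entering R*
  set c₁ := (1 + np) / sqlP + βa + 1 with hc₁def
  have hc₁0 : 0 < c₁ := by positivity
  set c₂ := (1 + nc) * L0 * ((1 + np) / lP + βa / sqlP) with hc₂def
  have hc₂0 : 0 ≤ c₂ := by positivity
  set t1 := 1 / c₁ with ht1def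
  set t2 := lQ * sqlP / (16 * cP * (L0 + 1) * (1 + np)) with ht2def
  set t3 := lQ / (16 * cP * (L0 + 1) * (βa + 1)) with ht3def
  set t4 := C * βa ^ 2 / (c₂ + 1) with ht4def
  set t5 := βa * sqlP / (4 * (1 + nc) * (L0 + 1)) with ht5def
  set t6 := lQ * βa * sqlP / (8 * cP * nb' * a') with ht6def
  set Rstar := min t1 (min t2 (min t3 (min t4 (min t5 t6)))) with hRstardef
  have hRstar : 0 < Rstar := by
    have h1 : 0 < t1 := by positivity
    have h2 : 0 < t2 := by positivity
    have h3 : 0 < t3 := by positivity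
    have h4 : 0 < t4 := by positivity
    have h5 : 0 < t5 := by positivity
    have h6 : 0 < t6 := by positivity
    simp only [hRstardef, lt_min_iff]
    exact ⟨h1, h2, h3, h4, h5, h6⟩
  clear_value b c S Q βa nb nb' nc np sqlP scP L0 a0 a' C c₁ c₂ t1 t2 t3 t4 t5 t6 Rstar
  refine ⟨Rstar, C, hRstar, hC0, hC1, ?_⟩
  intro ω R hω hR hRRs
  -- product-form consequences of R < R*
  have hRt : R < t1 ∧ R < t2 ∧ R < t3 ∧ R < t4 ∧ R < t5 ∧ R < t6 := by
    have := hRRs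
    simp only [hRstardef, lt_min_iff] at this
    tauto
  have hr1 : R * c₁ ≤ 1 := by
    have := hRt.1
    rw [ht1def, lt_div_iff₀ hc₁0] at this
    linarith
  have hr2 : R * (16 * cP * (L0 + 1) * (1 + np)) ≤ lQ * sqlP := by
    have := hRt.2.1
    rw [ht2def, lt_div_iff₀ (by positivity)] at this
    linarith
  have hr3 : R * (16 * cP * (L0 + 1) * (βa + 1)) ≤ lQ := by
    have := hRt.2.2.1
    rw [ht3def, lt_div_iff₀ (by positivity)] at this
    linarith
  have hr4 : R * (c₂ + 1) < C * βa ^ 2 := by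
    have := hRt.2.2.2.1
    rw [ht4def, lt_div_iff₀ (by positivity)] at this
    linarith
  have hr5 : R * (4 * (1 + nc) * (L0 + 1)) ≤ βa * sqlP := by
    have := hRt.2.2.2.2.1
    rw [ht5def, lt_div_iff₀ (by positivity)] at this
    linarith
  have hr6 : R * (8 * cP * nb' * a') ≤ lQ * βa * sqlP := by
    have := hRt.2.2.2.2.2
    rw [ht6def, lt_div_iff₀ (by positivity)] at this
    linarith
  set K := C * R with hKdef
  have hK0 : 0 < K := by positivity
  have hKR : K ≤ R := by
    calc K = C * R := hKdef
      _ ≤ 1 * R := mul_le_mul_of_nonneg_right hC1 hR.le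
      _ = R := one_mul R
  set M := 8 * K * ω * cP ^ 2 * nb' ^ 2 / lQ with hMdef
  have hM0 : 0 < M := by positivity
  have hMlQ : M * lQ = 8 * K * ω * cP ^ 2 * nb' ^ 2 := by
    rw [hMdef]; field_simp
  set δ := min (M * K * βa ^ 2 * ω / 4) (lQ / (8 * cP)) with hδdef
  have hδ0 : 0 < δ := by
    apply lt_min
    · positivity
    · positivity
  have hδ1 : δ ≤ M * K * βa ^ 2 * ω / 4 := min_le_left _ _
  have hδ2 : δ ≤ lQ / (8 * cP) := min_le_right _ _
  clear_value K M δ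
  -- key growth estimate
  have keyF : ∀ d ∈ D, ∀ x : EuclideanSpace ℝ (Fin (n+1)), ∀ u : ℝ,
      sqlP * ‖x‖ ≤ R → |u - ip p x| ≤ K * βa →
      ‖f d x u‖ + |g d x u| ≤ L0 * (1 + np) * ‖x‖ ^ 2 + L0 * ‖x‖ * |u - ip p x| := by
    intro d hd x u hx hu
    have hnx0 : (0:ℝ) ≤ ‖x‖ := norm_nonneg x
    have hnxR : ‖x‖ ≤ R / sqlP := by
      rw [le_div_iff₀ hsqlP]; linarith [hx]
    have hipx : |ip p x| ≤ np * ‖x‖ := by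
      calc |ip p x| ≤ ‖p‖ * ‖x‖ := abs_ip_le p x
        _ = np * ‖x‖ := by rw [hnpdef]
    have huu : |u| ≤ np * ‖x‖ + |u - ip p x| := by
      have : |u| ≤ |u - ip p x| + |ip p x| := by
        calc |u| = |(u - ip p x) + ip p x| := by ring_nf
          _ ≤ |u - ip p x| + |ip p x| := abs_add_le _ _
      linarith
    have harg : Real.sqrt (‖x‖ ^ 2 + u ^ 2) ≤ 1 := by
      have h1 : Real.sqrt (‖x‖ ^ 2 + u ^ 2) ≤ ‖x‖ + |u| := by
        have h2 : ‖x‖ ^ 2 + u ^ 2 ≤ (‖x‖ + |u|) ^ 2 := by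
          have := mul_nonneg (norm_nonneg x) (abs_nonneg u)
          have := sq_abs u
          linarith
        calc Real.sqrt (‖x‖ ^ 2 + u ^ 2) ≤ Real.sqrt ((‖x‖ + |u|) ^ 2) :=
              Real.sqrt_le_sqrt h2
          _ = ‖x‖ + |u| := Real.sqrt_sq (by positivity)
      have h3 : ‖x‖ + |u| ≤ (1 + np) * ‖x‖ + K * βa := by
        linarith [huu, hu]
      have h4 : (1 + np) * ‖x‖ + K * βa ≤ R * c₁ := by
        have e1 : (1 + np) * ‖x‖ ≤ (1 + np) * (R / sqlP) :=
          mul_le_mul_of_nonneg_left hnxR (by positivity)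
        have e2 : (1 + np) * (R / sqlP) = R * ((1 + np) / sqlP) := by ring
        have e3 : K * βa ≤ R * βa := mul_le_mul_of_nonneg_right hKR hβa0.le
        rw [hc₁def]; rw [e2] at e1
        have e4 : R * ((1 + np) / sqlP + βa + 1) = R * ((1 + np) / sqlP) + R * βa + R := by ring
        linarith [e1, e3, hR.le]
      linarith [hr1]
    have hs0 : (0:ℝ) ≤ Real.sqrt (‖x‖ ^ 2 + u ^ 2) := Real.sqrt_nonneg _
    have hLle : L (Real.sqrt (‖x‖ ^ 2 + u ^ 2)) ≤ L0 := by
      rw [hL0def]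
      exact hLmono (mem_Ici.mpr hs0) (mem_Ici.mpr one_pos.le) harg
    have hLs0 : 0 ≤ L (Real.sqrt (‖x‖ ^ 2 + u ^ 2)) := hLnn _ hs0
    have hgr := hgrowth d hd x u
    have e1 : L (Real.sqrt (‖x‖ ^ 2 + u ^ 2)) * ‖x‖ ^ 2 ≤ L0 * ‖x‖ ^ 2 :=
      mul_le_mul_of_nonneg_right hLle (sq_nonneg _)
    have e2 : L (Real.sqrt (‖x‖ ^ 2 + u ^ 2)) * ‖x‖ * |u|
        ≤ L0 * ‖x‖ * (np * ‖x‖ + |u - ip p x|) := by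
      have h5 : L (Real.sqrt (‖x‖ ^ 2 + u ^ 2)) * ‖x‖ ≤ L0 * ‖x‖ :=
        mul_le_mul_of_nonneg_right hLle hnx0
      have h6 : (0:ℝ) ≤ L (Real.sqrt (‖x‖ ^ 2 + u ^ 2)) * ‖x‖ := by positivity
      exact mul_le_mul h5 huu (abs_nonneg u) (by positivity)
    have : L0 * ‖x‖ ^ 2 + L0 * ‖x‖ * (np * ‖x‖ + |u - ip p x|)
        = L0 * (1 + np) * ‖x‖ ^ 2 + L0 * ‖x‖ * |u - ip p x| := by ring
    linarith [hgr, e1, e2]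
  refine ⟨M, δ, hM0, hδ0, ?_, ?_, ?_⟩
  · -- Cond33
    intro d hd x u hqf hu
    simp only [← hcdef, ← hbdef] at hu ⊢
    simp only [← hβadef] at hu
    have hnx0 : (0:ℝ) ≤ ‖x‖ := norm_nonneg x
    have hxq : lP * ‖x‖ ^ 2 ≤ R ^ 2 := by rw [← hqf]; exact hlPle x
    have hsnx : sqlP * ‖x‖ ≤ R := by
      apply sqrt_le_of_sq_le hR.le _ (by positivity)
      calc (sqlP * ‖x‖) ^ 2 = lP * ‖x‖ ^ 2 := by rw [mul_pow, hsqlPsq]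
        _ ≤ R ^ 2 := hxq
    have hxne : x ≠ 0 := by
      intro h0
      rw [h0] at hqf
      have hq0 : qf P (0 : EuclideanSpace ℝ (Fin (n+1))) = 0 := by
        rw [qf, ip_zero_left]
      rw [hq0] at hqf
      have h5 : 0 < R ^ 2 := pow_pos hR 2
      linarith
    have hnxpos : 0 < ‖x‖ := norm_pos_iff.mpr hxne
    have hqup : qf P x ≤ cP * ‖x‖ ^ 2 := by
      calc qf P x = ip x (mulVecE P x) := rfl
        _ ≤ |ip x (mulVecE P x)| := le_abs_self _
        _ ≤ ‖x‖ * ‖mulVecE P x‖ := abs_ip_le _ _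
        _ ≤ ‖x‖ * (cP * ‖x‖) := mul_le_mul_of_nonneg_left (hcPle x) hnx0
        _ = cP * ‖x‖ ^ 2 := by ring
    have hRsc : R ≤ scP * ‖x‖ := by
      apply sqrt_le_of_sq_le (by positivity) _ hR.le
      calc R ^ 2 = qf P x := hqf.symm
        _ ≤ cP * ‖x‖ ^ 2 := hqup
        _ = (scP * ‖x‖) ^ 2 := by rw [mul_pow, hscPsq]
    have hKF := keyF d hd x u hsnx hu
    have hFb : ‖f d x u‖ ≤ L0 * (1 + np) * ‖x‖ ^ 2 + L0 * ‖x‖ * (K * βa) := by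
      have h1 : L0 * ‖x‖ * |u - ip p x| ≤ L0 * ‖x‖ * (K * βa) :=
        mul_le_mul_of_nonneg_left hu (by positivity)
      linarith [abs_nonneg (g d x u), hKF]
    have hvec : mulVecE (matA (n+1)) x + f d x u + u • b
        = mulVecE S x + f d x u + (u - ip p x) • b := by
      have h1 := Sdecomp p x u
      rw [← hbdef, ← hSdef] at h1
      calc mulVecE (matA (n+1)) x + f d x u + u • b
          = (mulVecE (matA (n+1)) x + u • b) + f d x u := by abel
        _ = (mulVecE S x + (u - ip p x) • b) + f d x u := by rw [h1]
        _ = mulVecE S x + f d x u + (u - ip p x) • b := by abel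
    rw [hvec, mulVecE_addvec, mulVecE_addvec, ip_add_right, ip_add_right,
      mulVecE_smulvec, ip_smul_right]
    have T1 : ip x (mulVecE P (mulVecE S x)) ≤ -(lQ / 2) * ‖x‖ ^ 2 := by
      rw [key_sym P S hPs x]
      have h1 := hlQle x
      rw [← hQdef] at *
      linarith
    have T2 : ip x (mulVecE P (f d x u))
        ≤ cP * L0 * (1 + np) * ‖x‖ ^ 2 * ‖x‖ + cP * L0 * (K * βa) * ‖x‖ ^ 2 := by
      have h2 : ip x (mulVecE P (f d x u)) ≤ ‖x‖ * (cP * ‖f d x u‖) := by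
        calc ip x (mulVecE P (f d x u)) ≤ |ip x (mulVecE P (f d x u))| := le_abs_self _
          _ ≤ ‖x‖ * ‖mulVecE P (f d x u)‖ := abs_ip_le _ _
          _ ≤ ‖x‖ * (cP * ‖f d x u‖) :=
              mul_le_mul_of_nonneg_left (hcPle (f d x u)) hnx0
      have h3 : ‖x‖ * (cP * ‖f d x u‖)
          ≤ ‖x‖ * (cP * (L0 * (1 + np) * ‖x‖ ^ 2 + L0 * ‖x‖ * (K * βa))) := by
        apply mul_le_mul_of_nonneg_left _ hnx0
        exact mul_le_mul_of_nonneg_left hFb hcP0.le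
      calc ip x (mulVecE P (f d x u)) ≤ ‖x‖ * (cP * ‖f d x u‖) := h2
        _ ≤ ‖x‖ * (cP * (L0 * (1 + np) * ‖x‖ ^ 2 + L0 * ‖x‖ * (K * βa))) := h3
        _ = cP * L0 * (1 + np) * ‖x‖ ^ 2 * ‖x‖ + cP * L0 * (K * βa) * ‖x‖ ^ 2 := by ring
    have T3 : (u - ip p x) * ip x (mulVecE P b) ≤ K * βa * (cP * nb * ‖x‖) := by
      calc (u - ip p x) * ip x (mulVecE P b)
          ≤ |(u - ip p x) * ip x (mulVecE P b)| := le_abs_self _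
        _ = |u - ip p x| * |ip x (mulVecE P b)| := abs_mul _ _
        _ ≤ (K * βa) * (‖x‖ * (cP * nb)) := by
            apply mul_le_mul hu _ (abs_nonneg _) (by positivity)
            calc |ip x (mulVecE P b)| ≤ ‖x‖ * ‖mulVecE P b‖ := abs_ip_le _ _
              _ ≤ ‖x‖ * (cP * nb) := by
                  apply mul_le_mul_of_nonneg_left _ hnx0
                  calc ‖mulVecE P b‖ ≤ cP * ‖b‖ := hcPle b
                    _ = cP * nb := by rw [hnbdef]
        _ = K * βa * (cP * nb * ‖x‖) := by ring
    -- coefficient bounds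
    have step2 : ‖x‖ * (16 * cP * (L0 + 1) * (1 + np)) ≤ lQ := by
      have h1 : sqlP * ‖x‖ * (16 * cP * (L0 + 1) * (1 + np))
          ≤ R * (16 * cP * (L0 + 1) * (1 + np)) :=
        mul_le_mul_of_nonneg_right hsnx (by positivity)
      have h3 : sqlP * (‖x‖ * (16 * cP * (L0 + 1) * (1 + np))) ≤ sqlP * lQ := by
        linarith [h1, hr2]
      exact (mul_le_mul_iff_right₀ hsqlP).mp h3
    have c2a : cP * L0 * (1 + np) * ‖x‖ ≤ lQ / 16 := by
      linarith [step2, mul_nonneg (mul_nonneg hcP0.le (by positivity : (0:ℝ) ≤ (1+np))) hnx0]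
    have c3a : cP * L0 * (K * βa) ≤ lQ / 16 := by
      have h1 : K * βa ≤ R * (βa + 1) := by
        have := mul_le_mul_of_nonneg_right hKR hβa0.le
        have e0 : R * (βa + 1) = R * βa + R := by ring
        linarith [hR.le]
      have h2 : cP * L0 * (K * βa) ≤ cP * (L0 + 1) * (R * (βa + 1)) := by
        apply mul_le_mul _ h1 (by positivity) (by positivity)
        linarith [hcP0.le]
      linarith [hr3, h2]
    have c4a : K * βa * (cP * nb) ≤ (lQ / 8) * ‖x‖ := by
      have h1 : K * βa * (cP * nb) = C * (βa * cP * nb) * R := by rw [hKdef]; ring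
      have h2 : C * (βa * cP * nb) * R ≤ C * (βa * cP * nb) * (scP * ‖x‖) :=
        mul_le_mul_of_nonneg_left hRsc (by positivity)
      have h3 : C * (βa * cP * nb) * (scP * ‖x‖) = (C * (βa * cP * nb * scP)) * ‖x‖ := by ring
      have h4 : (C * (βa * cP * nb * scP)) * ‖x‖ ≤ (lQ / 8) * ‖x‖ :=
        mul_le_mul_of_nonneg_right hCkey hnx0
      linarith [h1 ▸ (h2.trans_eq h3)]
    have e2 : cP * L0 * (1 + np) * ‖x‖ ^ 2 * ‖x‖ ≤ (lQ / 16) * ‖x‖ ^ 2 := by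
      linarith [mul_le_mul_of_nonneg_right c2a (sq_nonneg ‖x‖)]
    have e3 : cP * L0 * (K * βa) * ‖x‖ ^ 2 ≤ (lQ / 16) * ‖x‖ ^ 2 :=
      mul_le_mul_of_nonneg_right c3a (sq_nonneg ‖x‖)
    have e4 : K * βa * (cP * nb * ‖x‖) ≤ (lQ / 8) * ‖x‖ ^ 2 := by
      linarith [mul_le_mul_of_nonneg_right c4a hnx0]
    have hfin : 0 < lQ * ‖x‖ ^ 2 := by positivity
    linarith [T1, T2, T3, e2, e3, e4, hfin]

  · -- Cond34
    intro d hd x u hqf hu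
    simp only [← hcdef, ← hbdef] at hu ⊢
    simp only [← hβadef] at hu
    have hnx0 : (0:ℝ) ≤ ‖x‖ := norm_nonneg x
    have hxq : lP * ‖x‖ ^ 2 ≤ R ^ 2 := le_trans (hlPle x) hqf
    have hsnx : sqlP * ‖x‖ ≤ R := by
      apply sqrt_le_of_sq_le hR.le _ (by positivity)
      calc (sqlP * ‖x‖) ^ 2 = lP * ‖x‖ ^ 2 := by rw [mul_pow, hsqlPsq]
        _ ≤ R ^ 2 := hxq
    have hnxR : ‖x‖ ≤ R / sqlP := by rw [le_div_iff₀ hsqlP]; linarith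
    have hKF := keyF d hd x u hsnx hu
    have hW1 : L0 * ‖x‖ * |u - ip p x| ≤ L0 * ‖x‖ * (K * βa) :=
      mul_le_mul_of_nonneg_left hu (by positivity)
    have hFb : ‖f d x u‖ ≤ L0 * (1 + np) * ‖x‖ ^ 2 + L0 * ‖x‖ * (K * βa) := by
      linarith [abs_nonneg (g d x u), hKF]
    have hgb : |g d x u| ≤ L0 * (1 + np) * ‖x‖ ^ 2 + L0 * ‖x‖ * (K * βa) := by
      linarith [norm_nonneg (f d x u), hKF]
    have hGb : |g d x u + ip c (f d x u)|
        ≤ (1 + nc) * (L0 * (1 + np) * ‖x‖ ^ 2 + L0 * ‖x‖ * (K * βa)) := by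
      have h1 : |ip c (f d x u)| ≤ nc * ‖f d x u‖ := by
        calc |ip c (f d x u)| ≤ ‖c‖ * ‖f d x u‖ := abs_ip_le _ _
          _ = nc * ‖f d x u‖ := by rw [hncdef]
      have h2 : nc * ‖f d x u‖
          ≤ nc * (L0 * (1 + np) * ‖x‖ ^ 2 + L0 * ‖x‖ * (K * βa)) :=
        mul_le_mul_of_nonneg_left hFb hnc0
      calc |g d x u + ip c (f d x u)| ≤ |g d x u| + |ip c (f d x u)| := abs_add_le _ _
        _ ≤ (L0 * (1 + np) * ‖x‖ ^ 2 + L0 * ‖x‖ * (K * βa))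
            + nc * (L0 * (1 + np) * ‖x‖ ^ 2 + L0 * ‖x‖ * (K * βa)) := by
            linarith [h1.trans h2]
        _ = (1 + nc) * (L0 * (1 + np) * ‖x‖ ^ 2 + L0 * ‖x‖ * (K * βa)) := by ring
    -- numeric bound
    have hb1 : ‖x‖ ^ 2 ≤ R ^ 2 / lP := by rw [le_div_iff₀ hlP]; linarith
    have hb2 : ‖x‖ * K ≤ R ^ 2 / sqlP := by
      have h1 : ‖x‖ * K ≤ (R / sqlP) * R := mul_le_mul hnxR hKR hK0.le (by positivity)
      have h2 : (R / sqlP) * R = R ^ 2 / sqlP := by ring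
      linarith [h1.trans_eq h2]
    have hfinal : (1 + nc) * (L0 * (1 + np) * ‖x‖ ^ 2 + L0 * ‖x‖ * (K * βa))
        ≤ R ^ 2 * c₂ := by
      have q1 : (1 + nc) * L0 * (1 + np) * ‖x‖ ^ 2
          ≤ (1 + nc) * L0 * (1 + np) * (R ^ 2 / lP) :=
        mul_le_mul_of_nonneg_left hb1 (by positivity)
      have q2 : (1 + nc) * L0 * βa * (‖x‖ * K)
          ≤ (1 + nc) * L0 * βa * (R ^ 2 / sqlP) :=
        mul_le_mul_of_nonneg_left hb2 (by positivity)
      have hc2eq : R ^ 2 * c₂ = (1 + nc) * L0 * (1 + np) * (R ^ 2 / lP)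
          + (1 + nc) * L0 * βa * (R ^ 2 / sqlP) := by
        rw [hc₂def]; field_simp
      rw [hc2eq]
      linarith [q1, q2]
    have hlt : R ^ 2 * c₂ < K * βa ^ 2 := by
      have h1 : R * c₂ < C * βa ^ 2 := by linarith [hr4, hR]
      have h2 : R * (R * c₂) < R * (C * βa ^ 2) := (mul_lt_mul_iff_right₀ hR).mpr h1
      calc R ^ 2 * c₂ = R * (R * c₂) := by ring
        _ < R * (C * βa ^ 2) := h2
        _ = K * βa ^ 2 := by rw [hKdef]; ring
    have hgoal : K * (ip c b) ^ 2 = K * βa ^ 2 := by rw [hβadef, sq_abs]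
    rw [hgoal]
    calc |g d x u + ip c (f d x u)|
        ≤ (1 + nc) * (L0 * (1 + np) * ‖x‖ ^ 2 + L0 * ‖x‖ * (K * βa)) := hGb
      _ ≤ R ^ 2 * c₂ := hfinal
      _ < K * βa ^ 2 := hlt
  · -- Cond35
    intro d hd x z hqf hwz u hudef
    simp only [← hcdef, ← hbdef, ← hSdef] at hudef ⊢
    have hnx0 : (0:ℝ) ≤ ‖x‖ := norm_nonneg x
    have hnz0 : (0:ℝ) ≤ |z| := abs_nonneg z
    have hxq : lP * ‖x‖ ^ 2 ≤ R ^ 2 := le_trans (hlPle x) hqf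
    have hsnx : sqlP * ‖x‖ ≤ R := by
      apply sqrt_le_of_sq_le hR.le _ (by positivity)
      calc (sqlP * ‖x‖) ^ 2 = lP * ‖x‖ ^ 2 := by rw [mul_pow, hsqlPsq]
        _ ≤ R ^ 2 := hxq
    have hue : u - ip p x = -(K * ip c b * ω * z) := by rw [hudef]; ring
    have hua : |u - ip p x| = K * βa * ω * |z| := by
      rw [hue, abs_neg, abs_mul, abs_mul, abs_mul, abs_of_pos hK0, abs_of_pos hω, hβadef]
    have huK : |u - ip p x| ≤ K * βa := by
      rw [hua]
      have e0 := mul_nonneg (mul_nonneg hK0.le hβa0.le) (sub_nonneg.mpr hwz)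
      have e1 : K * βa * (1 - ω * |z|) = K * βa - K * βa * ω * |z| := by ring
      linarith [e0, e1.le, e1.ge]
    have hKF := keyF d hd x u hsnx huK
    rw [hua] at hKF
    -- bounds on f and g with the refined error term
    have hFb : ‖f d x u‖ ≤ L0 * (1 + np) * ‖x‖ ^ 2 + L0 * ‖x‖ * (K * βa * ω * |z|) := by
      linarith [abs_nonneg (g d x u), hKF]
    have hgb : |g d x u| ≤ L0 * (1 + np) * ‖x‖ ^ 2 + L0 * ‖x‖ * (K * βa * ω * |z|) := by
      linarith [norm_nonneg (f d x u), hKF]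
    have hGb : |g d x u + ip c (f d x u)|
        ≤ a0 * ‖x‖ ^ 2 + (1 + nc) * L0 * (K * βa * ω) * (‖x‖ * |z|) := by
      have h1 : |ip c (f d x u)| ≤ nc * ‖f d x u‖ := by
        calc |ip c (f d x u)| ≤ ‖c‖ * ‖f d x u‖ := abs_ip_le _ _
          _ = nc * ‖f d x u‖ := by rw [hncdef]
      have h2 : nc * ‖f d x u‖
          ≤ nc * (L0 * (1 + np) * ‖x‖ ^ 2 + L0 * ‖x‖ * (K * βa * ω * |z|)) :=
        mul_le_mul_of_nonneg_left hFb hnc0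
      calc |g d x u + ip c (f d x u)| ≤ |g d x u| + |ip c (f d x u)| := abs_add_le _ _
        _ ≤ (L0 * (1 + np) * ‖x‖ ^ 2 + L0 * ‖x‖ * (K * βa * ω * |z|))
            + nc * (L0 * (1 + np) * ‖x‖ ^ 2 + L0 * ‖x‖ * (K * βa * ω * |z|)) := by
            linarith [h1.trans h2]
        _ = a0 * ‖x‖ ^ 2 + (1 + nc) * L0 * (K * βa * ω) * (‖x‖ * |z|) := by
            rw [ha0def]; ring
    -- X1 : main z-term bound
    have X1 : z * (M * g d x u + M * ip c (f d x u))
        ≤ M * a0 * ‖x‖ ^ 2 * |z| + M * ((1 + nc) * L0 * (K * βa * ω)) * (‖x‖ * z ^ 2) := by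
      have h1 : z * (M * g d x u + M * ip c (f d x u))
          ≤ |z| * (M * |g d x u + ip c (f d x u)|) := by
        calc z * (M * g d x u + M * ip c (f d x u))
            ≤ |z * (M * g d x u + M * ip c (f d x u))| := le_abs_self _
          _ = |z| * |M * (g d x u + ip c (f d x u))| := by rw [abs_mul]; ring_nf
          _ = |z| * (M * |g d x u + ip c (f d x u)|) := by
              rw [abs_mul, abs_of_pos hM0]
      have h2 : |z| * (M * |g d x u + ip c (f d x u)|)
          ≤ |z| * (M * (a0 * ‖x‖ ^ 2 + (1 + nc) * L0 * (K * βa * ω) * (‖x‖ * |z|))) := by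
        apply mul_le_mul_of_nonneg_left _ hnz0
        exact mul_le_mul_of_nonneg_left hGb hM0.le
      have h3 : |z| * (M * (a0 * ‖x‖ ^ 2 + (1 + nc) * L0 * (K * βa * ω) * (‖x‖ * |z|)))
          = M * a0 * ‖x‖ ^ 2 * |z| + M * ((1 + nc) * L0 * (K * βa * ω)) * (‖x‖ * z ^ 2) := by
        rw [← sq_abs z]; ring
      linarith [h1.trans h2, h3.le, h3.ge]
    -- Ei : absorb the z² piece of X1
    have h0i : ‖x‖ * (4 * (1 + nc) * (L0 + 1)) ≤ βa := by
      have h1 : sqlP * ‖x‖ * (4 * (1 + nc) * (L0 + 1))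
          ≤ R * (4 * (1 + nc) * (L0 + 1)) :=
        mul_le_mul_of_nonneg_right hsnx (by positivity)
      have h3 : sqlP * (‖x‖ * (4 * (1 + nc) * (L0 + 1))) ≤ sqlP * βa := by
        linarith [h1, hr5]
      exact (mul_le_mul_iff_right₀ hsqlP).mp h3
    have h1i : (1 + nc) * L0 * ‖x‖ ≤ βa / 4 := by
      linarith [h0i, mul_nonneg (by positivity : (0:ℝ) ≤ 1 + nc) hnx0]
    have Ei : M * ((1 + nc) * L0 * (K * βa * ω)) * (‖x‖ * z ^ 2)
        ≤ (M * K * βa ^ 2 * ω / 4) * z ^ 2 := by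
      have e := mul_le_mul_of_nonneg_left h1i
        (show (0:ℝ) ≤ M * K * βa * ω * z ^ 2 by positivity)
      linarith [e]
    -- Eii : Young on the x² piece of X1
    have hx6 : (R * (8 * cP * nb' * a')) ^ 2 ≤ (lQ * βa * sqlP) ^ 2 :=
      pow_le_pow_left₀ (by positivity) hr6 2
    have g5 : (lQ * βa * sqlP) ^ 2 = lQ ^ 2 * βa ^ 2 * lP := by
      rw [mul_pow, mul_pow, hsqlPsq]
    have key1 : 64 * cP ^ 2 * nb' ^ 2 * a0 ^ 2 * (lP * ‖x‖ ^ 2) ≤ lQ ^ 2 * βa ^ 2 * lP := by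
      have g1 : a0 ^ 2 ≤ a' ^ 2 := by
        have := mul_le_mul ((le_add_of_nonneg_right zero_le_one).trans_eq ha'def.symm)
          ((le_add_of_nonneg_right zero_le_one).trans_eq ha'def.symm) ha00 ha'0.le
        calc a0 ^ 2 = a0 * a0 := sq a0
          _ ≤ a' * a' := this
          _ = a' ^ 2 := (sq a').symm
      have g2 : a0 ^ 2 * (lP * ‖x‖ ^ 2) ≤ a' ^ 2 * R ^ 2 :=
        mul_le_mul g1 hxq (by positivity) (by positivity)
      have g3 : 64 * cP ^ 2 * nb' ^ 2 * (a0 ^ 2 * (lP * ‖x‖ ^ 2))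
          ≤ 64 * cP ^ 2 * nb' ^ 2 * (a' ^ 2 * R ^ 2) :=
        mul_le_mul_of_nonneg_left g2 (by positivity)
      calc 64 * cP ^ 2 * nb' ^ 2 * a0 ^ 2 * (lP * ‖x‖ ^ 2)
          = 64 * cP ^ 2 * nb' ^ 2 * (a0 ^ 2 * (lP * ‖x‖ ^ 2)) := by ring
        _ ≤ 64 * cP ^ 2 * nb' ^ 2 * (a' ^ 2 * R ^ 2) := g3
        _ = (R * (8 * cP * nb' * a')) ^ 2 := by ring
        _ ≤ (lQ * βa * sqlP) ^ 2 := hx6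
        _ = lQ ^ 2 * βa ^ 2 * lP := g5
    have key2 : 64 * cP ^ 2 * nb' ^ 2 * a0 ^ 2 * ‖x‖ ^ 2 ≤ lQ ^ 2 * βa ^ 2 := by
      have h1 : lP * (64 * cP ^ 2 * nb' ^ 2 * a0 ^ 2 * ‖x‖ ^ 2) ≤ lP * (lQ ^ 2 * βa ^ 2) := by
        linarith [key1]
      exact (mul_le_mul_iff_right₀ hlP).mp h1
    have hqy : (M * a0 * ‖x‖ ^ 2) ^ 2
        ≤ 4 * (M * K * βa ^ 2 * ω / 4) * ((lQ / 8) * ‖x‖ ^ 2) := by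
      have hh := mul_le_mul_of_nonneg_left key2
        (show (0:ℝ) ≤ K ^ 2 * ω ^ 2 * cP ^ 2 * nb' ^ 2 * ‖x‖ ^ 2 / 64 by positivity)
      have hq2 : (M * a0 * ‖x‖ ^ 2) ^ 2 * lQ ^ 2
          ≤ (4 * (M * K * βa ^ 2 * ω / 4) * ((lQ / 8) * ‖x‖ ^ 2)) * lQ ^ 2 := by
        have hL : (M * a0 * ‖x‖ ^ 2) ^ 2 * lQ ^ 2
            = (M * lQ) ^ 2 * a0 ^ 2 * ‖x‖ ^ 4 := by ring
        have hRR : (4 * (M * K * βa ^ 2 * ω / 4) * ((lQ / 8) * ‖x‖ ^ 2)) * lQ ^ 2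
            = (M * lQ) * (K * βa ^ 2 * ω * lQ ^ 2 * ‖x‖ ^ 2) / 8 := by ring
        rw [hL, hRR, hMlQ]
        linarith [hh]
      have hlQ2 : (0:ℝ) < lQ ^ 2 := by positivity
      exact le_of_mul_le_mul_right hq2 hlQ2
    have Eii : M * a0 * ‖x‖ ^ 2 * |z|
        ≤ (M * K * βa ^ 2 * ω / 4) * z ^ 2 + (lQ / 8) * ‖x‖ ^ 2 := by
      have hε : (0:ℝ) < M * K * βa ^ 2 * ω / 4 := by positivity
      have h1 := young2 hε hqy (p := |z|)
      rw [sq_abs] at h1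
      calc M * a0 * ‖x‖ ^ 2 * |z| = |z| * (M * a0 * ‖x‖ ^ 2) := by ring
        _ ≤ (M * K * βa ^ 2 * ω / 4) * z ^ 2 + (lQ / 8) * ‖x‖ ^ 2 := h1
    -- E2' : Young on the b'Px term
    have hB1 : |ip b (mulVecE P x)| ≤ nb * (cP * ‖x‖) := by
      calc |ip b (mulVecE P x)| ≤ ‖b‖ * ‖mulVecE P x‖ := abs_ip_le _ _
        _ = nb * ‖mulVecE P x‖ := by rw [hnbdef]
        _ ≤ nb * (cP * ‖x‖) := mul_le_mul_of_nonneg_left (hcPle x) hnb0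
    have hq2y : (K * βa * ω * nb * cP * ‖x‖) ^ 2
        ≤ 4 * (M * K * βa ^ 2 * ω / 4) * ((lQ / 8) * ‖x‖ ^ 2) := by
      have e : 4 * (M * K * βa ^ 2 * ω / 4) * ((lQ / 8) * ‖x‖ ^ 2)
          = (M * lQ) * (K * βa ^ 2 * ω * ‖x‖ ^ 2) / 8 := by ring
      rw [e, hMlQ]
      have hnbb : nb ^ 2 ≤ nb' ^ 2 := by
        have h6 : nb ≤ nb' := by rw [hnb'def]; linarith
        have := mul_le_mul h6 h6 hnb0 hnb'0.le
        calc nb ^ 2 = nb * nb := sq nb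
          _ ≤ nb' * nb' := this
          _ = nb' ^ 2 := (sq nb').symm
      linarith [mul_le_mul_of_nonneg_left hnbb
        (show (0:ℝ) ≤ K ^ 2 * βa ^ 2 * ω ^ 2 * cP ^ 2 * ‖x‖ ^ 2 by positivity)]
    have E2 : -(z * (K * ip c b * ω * ip b (mulVecE P x)))
        ≤ (M * K * βa ^ 2 * ω / 4) * z ^ 2 + (lQ / 8) * ‖x‖ ^ 2 := by
      have h1 : -(z * (K * ip c b * ω * ip b (mulVecE P x)))
          ≤ |z| * (K * βa * ω * nb * cP * ‖x‖) := by
        calc -(z * (K * ip c b * ω * ip b (mulVecE P x)))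
            ≤ |z * (K * ip c b * ω * ip b (mulVecE P x))| := neg_le_abs _
          _ = |z| * (K * (|ip c b| * (ω * |ip b (mulVecE P x)|))) := by
              rw [abs_mul, abs_mul, abs_mul, abs_mul, abs_of_pos hK0, abs_of_pos hω]
              ring
          _ ≤ |z| * (K * (βa * (ω * (nb * (cP * ‖x‖))))) := by
              apply mul_le_mul_of_nonneg_left _ hnz0
              apply mul_le_mul_of_nonneg_left _ hK0.le
              rw [hβadef]
              exact mul_le_mul_of_nonneg_left
                (mul_le_mul_of_nonneg_left hB1 hω.le) (abs_nonneg _)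
          _ = |z| * (K * βa * ω * nb * cP * ‖x‖) := by ring
      have hε : (0:ℝ) < M * K * βa ^ 2 * ω / 4 := by positivity
      have h2 := young2 hε hq2y (p := |z|)
      rw [sq_abs] at h2
      linarith
    -- remaining easy bounds
    have E3 : δ * z ^ 2 ≤ (M * K * βa ^ 2 * ω / 4) * z ^ 2 :=
      mul_le_mul_of_nonneg_right hδ1 (sq_nonneg z)
    have E4 : ip x (mulVecE P (mulVecE S x)) ≤ -(lQ / 2) * ‖x‖ ^ 2 := by
      rw [key_sym P S hPs x]
      have h1 := hlQle x
      rw [← hQdef] at *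
      linarith
    have hqup : qf P x ≤ cP * ‖x‖ ^ 2 := by
      calc qf P x = ip x (mulVecE P x) := rfl
        _ ≤ |ip x (mulVecE P x)| := le_abs_self _
        _ ≤ ‖x‖ * ‖mulVecE P x‖ := abs_ip_le _ _
        _ ≤ ‖x‖ * (cP * ‖x‖) := mul_le_mul_of_nonneg_left (hcPle x) hnx0
        _ = cP * ‖x‖ ^ 2 := by ring
    have E5 : δ * ip x (mulVecE P x) ≤ (lQ / 8) * ‖x‖ ^ 2 := by
      have h1 : δ * ip x (mulVecE P x) ≤ δ * (cP * ‖x‖ ^ 2) :=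
        mul_le_mul_of_nonneg_left hqup hδ0.le
      have h2 : δ * (8 * cP) ≤ lQ := by
        rw [le_div_iff₀ (by positivity)] at hδ2
        linarith
      linarith [h1, mul_le_mul_of_nonneg_right h2 (sq_nonneg ‖x‖)]
    -- E6 : the x'Pf term
    have hFb2 : ‖f d x u‖ ≤ L0 * (1 + np) * ‖x‖ ^ 2 + L0 * ‖x‖ * (K * βa) := by
      have h1 : L0 * ‖x‖ * (K * βa * ω * |z|) ≤ L0 * ‖x‖ * (K * βa) := by
        apply mul_le_mul_of_nonneg_left _ (by positivity)
        have e0 := mul_nonneg (mul_nonneg hK0.le hβa0.le) (sub_nonneg.mpr hwz)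
        have e1 : K * βa * (1 - ω * |z|) = K * βa - K * βa * ω * |z| := by ring
        linarith [e0, e1.le, e1.ge]
      linarith [abs_nonneg (g d x u), hKF]
    have step2 : ‖x‖ * (16 * cP * (L0 + 1) * (1 + np)) ≤ lQ := by
      have h1 : sqlP * ‖x‖ * (16 * cP * (L0 + 1) * (1 + np))
          ≤ R * (16 * cP * (L0 + 1) * (1 + np)) :=
        mul_le_mul_of_nonneg_right hsnx (by positivity)
      have h3 : sqlP * (‖x‖ * (16 * cP * (L0 + 1) * (1 + np))) ≤ sqlP * lQ := by
        linarith [h1, hr2]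
      exact (mul_le_mul_iff_right₀ hsqlP).mp h3
    have c2a : cP * L0 * (1 + np) * ‖x‖ ≤ lQ / 16 := by
      linarith [step2, mul_nonneg (mul_nonneg hcP0.le (by positivity : (0:ℝ) ≤ (1+np))) hnx0]
    have c3a : cP * L0 * (K * βa) ≤ lQ / 16 := by
      have h1 : K * βa ≤ R * (βa + 1) := by
        have := mul_le_mul_of_nonneg_right hKR hβa0.le
        have e0 : R * (βa + 1) = R * βa + R := by ring
        linarith [hR.le]
      have h2 : cP * L0 * (K * βa) ≤ cP * (L0 + 1) * (R * (βa + 1)) := by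
        apply mul_le_mul _ h1 (by positivity) (by positivity)
        linarith [hcP0.le]
      linarith [hr3, h2]
    have E6 : ip x (mulVecE P (f d x u)) ≤ (lQ / 16) * ‖x‖ ^ 2 + (lQ / 16) * ‖x‖ ^ 2 := by
      have h2 : ip x (mulVecE P (f d x u)) ≤ ‖x‖ * (cP * ‖f d x u‖) := by
        calc ip x (mulVecE P (f d x u)) ≤ |ip x (mulVecE P (f d x u))| := le_abs_self _
          _ ≤ ‖x‖ * ‖mulVecE P (f d x u)‖ := abs_ip_le _ _
          _ ≤ ‖x‖ * (cP * ‖f d x u‖) :=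
              mul_le_mul_of_nonneg_left (hcPle (f d x u)) hnx0
      have h3 : ‖x‖ * (cP * ‖f d x u‖)
          ≤ ‖x‖ * (cP * (L0 * (1 + np) * ‖x‖ ^ 2 + L0 * ‖x‖ * (K * βa))) := by
        apply mul_le_mul_of_nonneg_left _ hnx0
        exact mul_le_mul_of_nonneg_left hFb2 hcP0.le
      have e2 : cP * L0 * (1 + np) * ‖x‖ ^ 2 * ‖x‖ ≤ (lQ / 16) * ‖x‖ ^ 2 := by
        linarith [mul_le_mul_of_nonneg_right c2a (sq_nonneg ‖x‖)]
      have e3 : cP * L0 * (K * βa) * ‖x‖ ^ 2 ≤ (lQ / 16) * ‖x‖ ^ 2 :=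
        mul_le_mul_of_nonneg_right c3a (sq_nonneg ‖x‖)
      linarith [h2.trans h3, e2, e3]
    -- assemble
    have hmat : mulVecE (S + δ • 1) x = mulVecE S x + δ • x := by
      rw [mulVecE_addmat, mulVecE_smulone]
    rw [hmat, mulVecE_addvec, mulVecE_addvec, ip_add_right, ip_add_right,
      mulVecE_smulvec, ip_smul_right]
    have hsqb : (ip c b) ^ 2 = βa ^ 2 := by rw [hβadef, sq_abs]
    rw [hsqb]
    linarith [X1, Ei, Eii, E2, E3, E4, E5, E6]
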